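/- For any countable theory T = Th(A_P) of a P-combination: e-Sp(T) ≤ I(T,ω); if T is ω-categorical then e-Sp(T) = 0; and if T is Ehrenfeucht then e-Sp(T) < I(T,ω). -/

import Mathlib

open FirstOrder Language Cardinal

set_option autoImplicit false

/-- The induced structure on a subset of the universe of a structure in a relational language. -/
def subStructure (L : FirstOrder.Language.{0,0}) [L.IsRelational] (M : Type) [L.Structure M]
    (s : Set M) : L.Structure s where
  funMap := fun f _ => isEmptyElim f
  RelMap := fun r x => Structure.RelMap r (fun k => (x k : M))

/-- The set of realizations of `p_∞(x) = {¬ P i (x) : i ∈ I}` in a structure `N`. -/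
def pInfSet (L : FirstOrder.Language.{0,0}) {I : Type} (P : I → L.Relations 1)
    (N : Type) [L.Structure N] : Set N :=
  {a | ∀ i : I, ¬ Structure.RelMap (P i) ![a]}

noncomputable instance (L : FirstOrder.Language.{0,0}) [L.IsRelational] {I : Type}
    (P : I → L.Relations 1) (N : Type) [L.Structure N] : L.Structure (pInfSet L P N) :=
  subStructure L N (pInfSet L P N)

/-- The number of models of `T` of cardinality `κ`, up to isomorphism: `I(T, κ)`. -/
noncomputable def numModels (L : FirstOrder.Language.{0,0}) (T : L.Theory) (κ : Cardinal) :
    Cardinal :=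
  #(Quot (fun (N N' : {N : FirstOrder.Language.Theory.ModelType.{0,0,0} T // #N.1 = κ}) =>
    Nonempty (N.1 ≃[L] N'.1)))

/-- The `e`-spectrum of the theory of a `P`-combination: the number of pairwise elementarily
non-equivalent nonempty restrictions of countable models of the theory to the realizations of
`p_∞(x)`. -/
noncomputable def eSpP (L : FirstOrder.Language.{0,0}) [L.IsRelational] {I : Type}
    (P : I → L.Relations 1) (T : L.Theory) : Cardinal :=
  #{T0 : L.Theory // ∃ N : FirstOrder.Language.Theory.ModelType.{0,0,0} T,
    Countable N ∧ (pInfSet L P N).Nonempty ∧ T0 = L.completeTheory (pInfSet L P N.1)}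

section Aux

variable (L : FirstOrder.Language.{0,0}) [L.IsRelational] {I : Type} (P : I → L.Relations 1)

lemma singleton_vec_coe {N N' : Type} [L.Structure N] [L.Structure N'] (g : N ≃[L] N') (a : N) :
    ![g a] = g ∘ ![a] := by
  funext k
  fin_cases k <;> rfl

lemma mem_pInfSet_of_equiv {N N' : Type} [L.Structure N] [L.Structure N'] (g : N ≃[L] N')
    {a : N} (ha : a ∈ pInfSet L P N) : g a ∈ pInfSet L P N' := by
  intro i hi
  rw [singleton_vec_coe L g a, g.map_rel] at hi
  exact ha i hi

/-- An isomorphism restricts to an isomorphism of the `p_∞` parts. -/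
noncomputable def pInfEquiv {N N' : Type} [L.Structure N] [L.Structure N'] (g : N ≃[L] N') :
    (pInfSet L P N) ≃[L] (pInfSet L P N') where
  toFun := fun a => ⟨g a, mem_pInfSet_of_equiv L P g a.2⟩
  invFun := fun a => ⟨g.symm a, by
    have := mem_pInfSet_of_equiv L P g.symm a.2
    exact this⟩
  left_inv := fun a => by
    ext
    exact g.toEquiv.left_inv a
  right_inv := fun a => by
    ext
    exact g.toEquiv.right_inv a
  map_fun' := fun f _ => isEmptyElim f
  map_rel' := by
    intro n r x
    show Structure.RelMap r (fun k => (g (x k) : N')) ↔ Structure.RelMap r (fun k => ((x k : N)))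
    have : (fun k => (g (x k) : N')) = g ∘ (fun k => ((x k : N))) := rfl
    rw [this, g.map_rel]

lemma completeTheory_pInf_eq {N N' : Type} [L.Structure N] [L.Structure N'] (g : N ≃[L] N') :
    L.completeTheory (pInfSet L P N) = L.completeTheory (pInfSet L P N') :=
  StrongHomClass.elementarilyEquivalent (pInfEquiv L P g)

end Aux

section Main

theorem stmt18 (L : FirstOrder.Language.{0,0}) [L.IsRelational] (M : Type) [L.Structure M]
    (I : Type) (P : I → L.Relations 1)
    (hcard : L.card ≤ ℵ₀) (hctblI : Countable I) (hinf : Infinite M)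
    (hdisj : ∀ i j : I, i ≠ j → ∀ a : M,
      ¬ (Structure.RelMap (P i) ![a] ∧ Structure.RelMap (P j) ![a]))
    (hne : ∀ i : I, ∃ a : M, Structure.RelMap (P i) ![a])
    (hcover : ∀ a : M, ∃ i : I, Structure.RelMap (P i) ![a])
    (hnocross : ∀ (n : ℕ) (r : L.Relations n) (x : Fin n → M),
      Structure.RelMap r x → ∃ i : I, ∀ k : Fin n, Structure.RelMap (P i) ![x k]) :
    Cardinal.lift.{1} (eSpP L P (L.completeTheory M)) ≤ numModels L (L.completeTheory M) ℵ₀ ∧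
    (numModels L (L.completeTheory M) ℵ₀ = 1 → eSpP L P (L.completeTheory M) = 0) ∧
    ((1 < numModels L (L.completeTheory M) ℵ₀ ∧ numModels L (L.completeTheory M) ℵ₀ < ℵ₀) →
      Cardinal.lift.{1} (eSpP L P (L.completeTheory M)) < numModels L (L.completeTheory M) ℵ₀) := by
  classical
  set T := L.completeTheory M with hT
  haveI : M ⊨ T := Theory.model_iff_subset_completeTheory.2 (Set.Subset.refl _)
  obtain ⟨S, -, hScard⟩ := exists_elementarySubstructure_card_eq L (∅ : Set M) ℵ₀ le_rfl
    (by simp) (by simpa using hcard) (by simpa using (Cardinal.infinite_iff.1 hinf))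
  rw [Cardinal.lift_id, Cardinal.lift_id] at hScard
  haveI : Nonempty M := inferInstance
  haveI hSmod : (S : Type) ⊨ T := inferInstance
  haveI : Nonempty S := inferInstance
  have hSempty : pInfSet L P S = ∅ := by
    ext a
    simp only [Set.mem_empty_iff_false, iff_false]
    intro ha
    obtain ⟨i, hi⟩ := hcover (a : M)
    apply ha i
    show Structure.RelMap (P i) (fun k => ((![a] k : S) : M))
    have : (fun k => ((![a] k : S) : M)) = ![(a : M)] := by
      funext k; fin_cases k; rfl
    rw [this]
    exact hi
  -- bundle S as a model
  let N0 : Theory.ModelType.{0,0,0} T := Theory.ModelType.of T S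
  have hN0card : #(N0.Carrier) = ℵ₀ := hScard
  -- the subtype of theories counted by eSpP
  let SetS := {T0 : L.Theory // ∃ N : Theory.ModelType.{0,0,0} T,
    Countable N ∧ (pInfSet L P N).Nonempty ∧ T0 = L.completeTheory (pInfSet L P N.1)}
  let Q := {N : Theory.ModelType.{0,0,0} T // #N.1 = ℵ₀}
  let rel : Q → Q → Prop := fun N N' => Nonempty (N.1 ≃[L] N'.1)
  have hrel : Equivalence rel := by
    constructor
    · exact fun N => ⟨Language.Equiv.refl L N.1⟩
    · rintro N N' ⟨g⟩; exact ⟨g.symm⟩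
    · rintro N N' N'' ⟨g⟩ ⟨h⟩; exact ⟨h.comp g⟩
  -- each witness model is countably infinite
  have hwit : ∀ x : SetS, ∃ N : Q, Countable N.1 ∧ (pInfSet L P N.1).Nonempty ∧
      x.1 = L.completeTheory (pInfSet L P N.1.1) := by
    rintro ⟨T0, N, hcN, hneN, hTN⟩
    haveI : Countable N := hcN
    haveI : N.Carrier ⊨ L.completeTheory M := N.is_model
    have hNM : (N : Type) ≅[L] M :=
      elementarilyEquivalent_iff.2 (fun φ => realize_iff_of_model_completeTheory M N φ)
    haveI : Infinite N := hNM.symm.infinite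
    exact ⟨⟨N, Cardinal.mk_eq_aleph0 N.Carrier⟩, hcN, hneN, hTN⟩
  let f : SetS → Q := fun x => (hwit x).choose
  let g : SetS → Quot rel := fun x => Quot.mk rel (f x)
  have hginj : Function.Injective g := by
    intro x y hxy
    have hx := (hwit x).choose_spec
    have hy := (hwit y).choose_spec
    have : rel (f x) (f y) := hrel.eqvGen_iff.1 (Quot.eq.1 hxy)
    obtain ⟨e⟩ := this
    apply Subtype.ext
    rw [hx.2.2, hy.2.2, completeTheory_pInf_eq L P e]
  let q0 : Quot rel := Quot.mk rel ⟨N0, hN0card⟩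
  have hq0 : ∀ x : SetS, g x ≠ q0 := by
    intro x hx
    obtain ⟨e⟩ : rel (f x) ⟨N0, hN0card⟩ := hrel.eqvGen_iff.1 (Quot.eq.1 hx)
    obtain ⟨a, ha⟩ := (hwit x).choose_spec.2.1
    have : e a ∈ pInfSet L P S := mem_pInfSet_of_equiv L P e ha
    rw [hSempty] at this
    exact this
  have hmain : Cardinal.lift.{1} #SetS ≤ #(Quot rel) := by
    rw [← Cardinal.mk_uLift]
    exact Cardinal.mk_le_of_injective
      (f := fun x : ULift.{1} SetS => g x.down)
      (fun a b hab => ULift.ext _ _ (hginj hab))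
  have hplus : Cardinal.lift.{1} #SetS + 1 ≤ #(Quot rel) := by
    have : #(ULift.{1} (SetS ⊕ (PUnit : Type))) = Cardinal.lift.{1} #SetS + 1 := by
      simp
    rw [← this]
    refine Cardinal.mk_le_of_injective
      (f := fun x : ULift.{1} (SetS ⊕ (PUnit : Type)) => Sum.elim g (fun _ => q0) x.down) ?_
    rintro ⟨a | a⟩ ⟨b | b⟩ hab
    · exact congrArg (ULift.up ∘ Sum.inl) (hginj hab)
    · exact absurd hab (hq0 a)
    · exact absurd hab.symm (hq0 b)
    · rfl
  have heq1 : eSpP L P T = #SetS := rfl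
  have heq2 : numModels L T ℵ₀ = #(Quot rel) := rfl
  refine ⟨?_, ?_, ?_⟩
  · rw [heq1, heq2]; exact hmain
  · intro h1
    rw [heq2] at h1
    rw [heq1]
    have h1' : Cardinal.lift.{1} #SetS + 1 ≤ 1 := h1 ▸ hplus
    have h0 : Cardinal.lift.{1} #SetS = 0 := by
      by_contra h
      have h2 : (1 : Cardinal.{1}) + 1 ≤ 1 :=
        le_trans (add_le_add (Cardinal.one_le_iff_ne_zero.2 h) (le_refl 1)) h1'
      norm_num at h2
    rwa [Cardinal.lift_eq_zero] at h0
  · rintro ⟨h1, h2⟩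
    rw [heq1, heq2]
    rw [heq2] at h1 h2
    obtain ⟨n, hn⟩ := Cardinal.lt_aleph0.1 h2
    have hle : Cardinal.lift.{1} #SetS + 1 ≤ (n : Cardinal) := hn ▸ hplus
    have hfin : Cardinal.lift.{1} #SetS < ℵ₀ :=
      lt_of_le_of_lt (le_trans (self_le_add_right _ 1) hle) (Cardinal.nat_lt_aleph0 n)
    obtain ⟨m, hm⟩ := Cardinal.lt_aleph0.1 hfin
    rw [hm] at hle
    rw [hm, hn]
    have : ((m + 1 : ℕ) : Cardinal) ≤ (n : Cardinal) := by push_cast; exact hle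
    have hmn : m + 1 ≤ n := by exact_mod_cast this
    exact_mod_cast Nat.lt_of_succ_le hmn

end Main
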